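/- Let F be a field of characteristic 2, 𝒢 the group generated by yi with yi² = 1 and ((yi,yj),yk) = 1, F𝒢 its group algebra, d_{ij} = (yi,yj) + 1 ∈ F𝒢, and I the two-sided ideal of F𝒢 generated by all elements d_{i1 i2} d_{i3 i4} + d_{i1 i3} d_{i2 i4}. Then [u1, u2, u3] ∈ I for all u1, u2, u3 ∈ F𝒢, i.e. F𝒢/I is Lie nilpotent of class at most 2. -/

import Mathlib

/-- The group commutator `(a,b) = a⁻¹ b⁻¹ a b`. -/
def gc {G : Type*} [Group G] (a b : G) : G := a⁻¹ * b⁻¹ * a * b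

/-- The relations `yᵢ² = 1` and `((yᵢ,yⱼ),yₖ) = 1`. -/
def grpRels : Set (FreeGroup ℕ) :=
  (Set.range fun i => FreeGroup.of i ^ 2) ∪
    {x | ∃ i j k, x = gc (gc (FreeGroup.of i) (FreeGroup.of j)) (FreeGroup.of k)}

/-- The group `𝒢` presented by `yᵢ² = 1`, `((yᵢ,yⱼ),yₖ) = 1`. -/
def GrpG : Type := PresentedGroup grpRels

instance : Group GrpG := by unfold GrpG; infer_instance

/-- The generator `yᵢ` of `𝒢`. -/
def yy (i : ℕ) : GrpG := PresentedGroup.of i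

set_option linter.unusedSectionVars false

-- basic group facts
lemma rel_one {r : FreeGroup ℕ} (hr : r ∈ grpRels) :
    (PresentedGroup.mk grpRels r : GrpG) = 1 := by
  have : r ∈ Subgroup.normalClosure grpRels := Subgroup.subset_normalClosure hr
  exact (QuotientGroup.eq_one_iff r).mpr this

lemma yy_sq (i : ℕ) : yy i * yy i = 1 := by
  have : (PresentedGroup.mk grpRels (FreeGroup.of i ^ 2) : GrpG) = 1 :=
    rel_one (Or.inl ⟨i, rfl⟩)
  rw [map_pow, pow_two] at this
  exact this

lemma gc_mk (a b : FreeGroup ℕ) :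
    (PresentedGroup.mk grpRels (gc a b) : GrpG)
      = gc (PresentedGroup.mk grpRels a) (PresentedGroup.mk grpRels b) := by
  simp [gc, map_mul, map_inv]

lemma gc_yyy (i j k : ℕ) : gc (gc (yy i) (yy j)) (yy k) = 1 := by
  have : (PresentedGroup.mk grpRels
      (gc (gc (FreeGroup.of i) (FreeGroup.of j)) (FreeGroup.of k)) : GrpG) = 1 :=
    rel_one (Or.inr ⟨i, j, k, rfl⟩)
  rwa [gc_mk, gc_mk] at this

lemma grp_ind {P : GrpG → Prop} (h1 : P 1) (hy : ∀ i, P (yy i))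
    (hmul : ∀ a b, P a → P b → P (a * b)) (hinv : ∀ a, P a → P a⁻¹) (g : GrpG) : P g := by
  have hg : g ∈ Subgroup.closure (Set.range yy) := by
    have : Subgroup.closure (Set.range yy) = ⊤ :=
      PresentedGroup.closure_range_of grpRels
    rw [this]; trivial
  exact Subgroup.closure_induction (fun x hx => by obtain ⟨i, rfl⟩ := hx; exact hy i) h1
    (fun a b _ _ pa pb => hmul a b pa pb) (fun a _ pa => hinv a pa) hg

-- pure commutator identities
lemma gc_one_left (b : GrpG) : gc 1 b = 1 := by unfold gc; group
lemma gc_one_right (a : GrpG) : gc a 1 = 1 := by unfold gc; group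
lemma gc_self (a : GrpG) : gc a a = 1 := by unfold gc; group
lemma gc_mul_right (g b1 b2 : GrpG) :
    gc g (b1 * b2) = gc g b2 * (b2⁻¹ * gc g b1 * b2) := by unfold gc; group
lemma gc_mul_left (a1 a2 b : GrpG) :
    gc (a1 * a2) b = (a2⁻¹ * gc a1 b * a2) * gc a2 b := by unfold gc; group
lemma gc_inv_right (g b : GrpG) : gc g b⁻¹ = b * (gc g b)⁻¹ * b⁻¹ := by unfold gc; group
lemma gc_inv_left (a b : GrpG) : gc a⁻¹ b = a * (gc a b)⁻¹ * a⁻¹ := by unfold gc; group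

lemma eq_comm_of_gc_eq_one {a b : GrpG} (h : gc a b = 1) : Commute a b := by
  unfold gc at h
  have h2 : b * a * (a⁻¹ * b⁻¹ * a * b) = a * b := by group
  rw [h, mul_one] at h2
  exact h2.symm

lemma central_of_commute_gen (z : GrpG) (h : ∀ i, Commute z (yy i)) :
    z ∈ Subgroup.center GrpG := by
  rw [Subgroup.mem_center_iff]
  intro g
  have : Commute z g := by
    induction g using grp_ind with
    | h1 => exact Commute.one_right z
    | hy i => exact h i
    | hmul a b pa pb => exact pa.mul_right pb
    | hinv a pa => exact pa.inv_right
  exact this.symm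


lemma conj_central {z : GrpG} (h : z ∈ Subgroup.center GrpG) (g : GrpG) :
    g⁻¹ * z * g = z := by
  rw [Subgroup.mem_center_iff.mp h g⁻¹]; group

lemma conj_central' {z : GrpG} (h : z ∈ Subgroup.center GrpG) (g : GrpG) :
    g * z * g⁻¹ = z := by
  rw [Subgroup.mem_center_iff.mp h g]; group

lemma gc_central : ∀ a b : GrpG, gc a b ∈ Subgroup.center GrpG := by
  have base : ∀ i, ∀ b, gc (yy i) b ∈ Subgroup.center GrpG := by
    intro i b
    induction b using grp_ind with
    | h1 => rw [gc_one_right]; exact Subgroup.one_mem _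
    | hy j =>
      refine central_of_commute_gen _ (fun k => eq_comm_of_gc_eq_one (gc_yyy i j k))
    | hmul b1 b2 p1 p2 =>
      rw [gc_mul_right]
      rw [conj_central p1]; exact Subgroup.mul_mem _ p2 p1
    | hinv b p =>
      rw [gc_inv_right]
      rw [conj_central' (Subgroup.inv_mem _ p)]; exact Subgroup.inv_mem _ p
  intro a b
  induction a using grp_ind with
  | h1 => rw [gc_one_left]; exact Subgroup.one_mem _
  | hy i => exact base i b
  | hmul a1 a2 p1 p2 =>
    rw [gc_mul_left]
    rw [conj_central p1]; exact Subgroup.mul_mem _ p1 p2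
  | hinv a p =>
    rw [gc_inv_left]
    rw [conj_central' (Subgroup.inv_mem _ p)]; exact Subgroup.inv_mem _ p

lemma central_comm {z : GrpG} (h : z ∈ Subgroup.center GrpG) (g : GrpG) :
    g * z = z * g := Subgroup.mem_center_iff.mp h g

lemma gc_commute (a b c d : GrpG) : Commute (gc a b) (gc c d) :=
  (central_comm (gc_central a b) (gc c d)).symm

lemma gc_mul_left' (a1 a2 b : GrpG) : gc (a1 * a2) b = gc a1 b * gc a2 b := by
  rw [gc_mul_left, conj_central (gc_central a1 b)]

lemma gc_mul_right' (g b1 b2 : GrpG) : gc g (b1 * b2) = gc g b1 * gc g b2 := by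
  rw [gc_mul_right, conj_central (gc_central g b1)]
  exact central_comm (gc_central g b1) (gc g b2)

lemma gc_inv_left' (a b : GrpG) : gc a⁻¹ b = (gc a b)⁻¹ := by
  rw [gc_inv_left, conj_central' ((Subgroup.center GrpG).inv_mem (gc_central a b))]

lemma gc_inv_right' (a b : GrpG) : gc a b⁻¹ = (gc a b)⁻¹ := by
  rw [gc_inv_right, conj_central' ((Subgroup.center GrpG).inv_mem (gc_central a b))]

lemma gc_sq : ∀ a b : GrpG, gc a b * gc a b = 1 := by
  have base : ∀ i, ∀ b, gc (yy i) b * gc (yy i) b = 1 := by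
    intro i b
    induction b using grp_ind with
    | h1 => rw [gc_one_right, mul_one]
    | hy j =>
      rw [show gc (yy i) (yy j) * gc (yy i) (yy j)
            = gc (yy i * yy i) (yy j) * (yy i)⁻¹ * (yy i) by
          rw [gc_mul_left, conj_central (gc_central (yy i) (yy j))]; group]
      rw [yy_sq, gc_one_left]; group
    | hmul b1 b2 q1 q2 =>
      rw [gc_mul_right', (gc_commute (yy i) b2 (yy i) b1).mul_mul_mul_comm, q1, q2, mul_one]
    | hinv b q => rw [gc_inv_right', ← mul_inv_rev, q, inv_one]
  intro a b
  induction a using grp_ind with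
  | h1 => rw [gc_one_left, mul_one]
  | hy i => exact base i b
  | hmul a1 a2 q1 q2 =>
    rw [gc_mul_left', (gc_commute a2 b a1 b).mul_mul_mul_comm, q1, q2, mul_one]
  | hinv a q => rw [gc_inv_left', ← mul_inv_rev, q, inv_one]

lemma gc_symm (a b : GrpG) : gc a b = gc b a := by
  have h1 : gc b a = (gc a b)⁻¹ := by unfold gc; group
  rw [h1, inv_eq_of_mul_eq_one_right (gc_sq a b)]

lemma gc_inv_left'' (a b : GrpG) : gc a⁻¹ b = gc a b := by
  rw [gc_inv_left', inv_eq_of_mul_eq_one_right (gc_sq a b)]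

lemma gc_inv_right'' (a b : GrpG) : gc a b⁻¹ = gc a b := by
  rw [gc_inv_right', inv_eq_of_mul_eq_one_right (gc_sq a b)]

/-- `d_{ij} = (yᵢ,yⱼ) + 1` in the group algebra `F𝒢`. -/
noncomputable def dd (F : Type*) [Field F] (i j : ℕ) : MonoidAlgebra F GrpG :=
  MonoidAlgebra.of F GrpG (gc (yy i) (yy j)) + 1

/-- The two-sided ideal `I` of `F𝒢` generated by all
`d_{i₁i₂} d_{i₃i₄} + d_{i₁i₃} d_{i₂i₄}`. -/
noncomputable def II (F : Type*) [Field F] : TwoSidedIdeal (MonoidAlgebra F GrpG) :=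
  TwoSidedIdeal.span
    {x | ∃ i1 i2 i3 i4, x = dd F i1 i2 * dd F i3 i4 + dd F i1 i3 * dd F i2 i4}


section Alg

variable (F : Type*) [Field F] [CharP F 2]

lemma two_eq_zero (x : MonoidAlgebra F GrpG) : x + x = 0 := by
  have h2 : (2 : F) = 0 := by
    have := CharP.cast_eq_zero F 2
    exact_mod_cast this
  calc x + x = (2 : F) • x := (two_smul F x).symm
    _ = 0 := by rw [h2, zero_smul]

lemma sub_eq_add' (x y : MonoidAlgebra F GrpG) : x - y = x + y := by
  rw [sub_eq_iff_eq_add, add_assoc, two_eq_zero, add_zero]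

noncomputable def dlt (a b : GrpG) : MonoidAlgebra F GrpG :=
  MonoidAlgebra.of F GrpG (gc a b) + 1

lemma dd_eq_dlt (i j : ℕ) : dd F i j = dlt F (yy i) (yy j) := rfl

lemma of_central_commute {z : GrpG} (hz : z ∈ Subgroup.center GrpG)
    (x : MonoidAlgebra F GrpG) : Commute (MonoidAlgebra.of F GrpG z) x := by
  induction x using MonoidAlgebra.induction_on with
  | of g =>
    show _ * _ = _ * _
    rw [← map_mul, ← map_mul, (central_comm hz g).symm]
  | add f g hf hg => exact hf.add_right hg
  | smul r f hf => exact hf.smul_right r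

lemma dlt_commute (a b : GrpG) (x : MonoidAlgebra F GrpG) : Commute (dlt F a b) x :=
  (of_central_commute F (gc_central a b) x).add_left (Commute.one_left x)

lemma dlt_self (a : GrpG) : dlt F a a = 0 := by
  unfold dlt; rw [gc_self, map_one]; exact two_eq_zero F 1

lemma dlt_one_left (b : GrpG) : dlt F 1 b = 0 := by
  unfold dlt; rw [gc_one_left, map_one]; exact two_eq_zero F 1

lemma dlt_one_right (a : GrpG) : dlt F a 1 = 0 := by
  unfold dlt; rw [gc_one_right, map_one]; exact two_eq_zero F 1

lemma dlt_symm (a b : GrpG) : dlt F a b = dlt F b a := by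
  unfold dlt; rw [gc_symm]

lemma dlt_inv_left (a b : GrpG) : dlt F a⁻¹ b = dlt F a b := by
  unfold dlt; rw [gc_inv_left'']

lemma dlt_inv_right (a b : GrpG) : dlt F a b⁻¹ = dlt F a b := by
  unfold dlt; rw [gc_inv_right'']

lemma dlt_mul_left (a1 a2 b : GrpG) :
    dlt F (a1 * a2) b = dlt F a1 b * dlt F a2 b + dlt F a1 b + dlt F a2 b := by
  unfold dlt
  rw [gc_mul_left', map_mul]
  set x := MonoidAlgebra.of F GrpG (gc a1 b)
  set y := MonoidAlgebra.of F GrpG (gc a2 b)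
  have h : (x + 1) * (y + 1) + (x + 1) + (y + 1)
      = x * y + 1 + ((x + x) + (y + y) + (1 + 1)) := by noncomm_ring
  rw [h, two_eq_zero F x, two_eq_zero F y, two_eq_zero F 1]
  simp

lemma dlt_mul_right (a b1 b2 : GrpG) :
    dlt F a (b1 * b2) = dlt F a b1 * dlt F a b2 + dlt F a b1 + dlt F a b2 := by
  unfold dlt
  rw [gc_mul_right', map_mul]
  set x := MonoidAlgebra.of F GrpG (gc a b1)
  set y := MonoidAlgebra.of F GrpG (gc a b2)
  have h : (x + 1) * (y + 1) + (x + 1) + (y + 1)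
      = x * y + 1 + ((x + x) + (y + y) + (1 + 1)) := by noncomm_ring
  rw [h, two_eq_zero F x, two_eq_zero F y, two_eq_zero F 1]
  simp

lemma gen_mem (i1 i2 i3 i4 : ℕ) :
    dd F i1 i2 * dd F i3 i4 + dd F i1 i3 * dd F i2 i4 ∈ II F :=
  TwoSidedIdeal.subset_span ⟨i1, i2, i3, i4, rfl⟩

lemma smul_mem_II (c : F) {x : MonoidAlgebra F GrpG} (h : x ∈ II F) : c • x ∈ II F := by
  have : c • x = (c • (1 : MonoidAlgebra F GrpG)) * x := by rw [smul_mul_assoc, one_mul]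
  rw [this]
  exact (II F).mul_mem_left _ _ h

lemma baseA (j i k : ℕ) : dlt F (yy j) (yy i) * dlt F (yy k) (yy i) ∈ II F := by
  have h := gen_mem F j i k i
  rw [show dd F i i = 0 from dlt_self F (yy i), mul_zero, add_zero] at h
  rw [← dd_eq_dlt, ← dd_eq_dlt]
  exact h

lemma baseB (k i l j : ℕ) :
    dlt F (yy k) (yy i) * dlt F (yy l) (yy j)
      + dlt F (yy k) (yy j) * dlt F (yy l) (yy i) ∈ II F := by
  have g1 := gen_mem F k i l j
  have g2 := gen_mem F k j l i
  rw [show dd F j i = dd F i j from dlt_symm F (yy j) (yy i)] at g2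
  have hsum := (II F).add_mem g1 g2
  have he : dd F k i * dd F l j + dd F k l * dd F i j
      + (dd F k j * dd F l i + dd F k l * dd F i j)
      = dd F k i * dd F l j + dd F k j * dd F l i
        + (dd F k l * dd F i j + dd F k l * dd F i j) := by abel
  rw [he, two_eq_zero, add_zero] at hsum
  rw [← dd_eq_dlt, ← dd_eq_dlt, ← dd_eq_dlt, ← dd_eq_dlt]
  exact hsum

end Alg

section Main

variable (F : Type*) [Field F] [CharP F 2]

lemma stageA (i : ℕ) (a : GrpG) : ∀ c : GrpG, dlt F a (yy i) * dlt F c (yy i) ∈ II F := by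
  induction a using grp_ind with
  | h1 => intro c; rw [dlt_one_left, zero_mul]; exact (II F).zero_mem
  | hy j =>
    intro c
    induction c using grp_ind with
    | h1 => rw [dlt_one_left, mul_zero]; exact (II F).zero_mem
    | hy k => exact baseA F j i k
    | hmul c1 c2 ih1 ih2 =>
      have e : dlt F (yy j) (yy i) * dlt F (c1 * c2) (yy i)
          = (dlt F (yy j) (yy i) * dlt F c1 (yy i)) * dlt F c2 (yy i)
            + dlt F (yy j) (yy i) * dlt F c1 (yy i)
            + dlt F (yy j) (yy i) * dlt F c2 (yy i) := by
        rw [dlt_mul_left]; noncomm_ring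
      rw [e]
      exact (II F).add_mem ((II F).add_mem ((II F).mul_mem_right _ _ ih1) ih1) ih2
    | hinv c ih => rw [dlt_inv_left]; exact ih
  | hmul a1 a2 ih1 ih2 =>
    intro c
    have e : dlt F (a1 * a2) (yy i) * dlt F c (yy i)
        = (dlt F a1 (yy i) * dlt F a2 (yy i)) * dlt F c (yy i)
          + dlt F a1 (yy i) * dlt F c (yy i)
          + dlt F a2 (yy i) * dlt F c (yy i) := by
      rw [dlt_mul_left]; noncomm_ring
    rw [e]
    exact (II F).add_mem ((II F).add_mem ((II F).mul_mem_right _ _ (ih1 a2)) (ih1 c)) (ih2 c)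
  | hinv a ih => intro c; rw [dlt_inv_left]; exact ih c

lemma stageB (i j : ℕ) (a : GrpG) :
    ∀ c : GrpG, dlt F a (yy i) * dlt F c (yy j) + dlt F a (yy j) * dlt F c (yy i) ∈ II F := by
  induction a using grp_ind with
  | h1 =>
    intro c
    rw [dlt_one_left, dlt_one_left, zero_mul, zero_mul, add_zero]
    exact (II F).zero_mem
  | hy k =>
    intro c
    induction c using grp_ind with
    | h1 =>
      rw [dlt_one_left, dlt_one_left, mul_zero, mul_zero, add_zero]
      exact (II F).zero_mem
    | hy l => exact baseB F k i l j
    | hmul c1 c2 ih1 ih2 =>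
      have e : dlt F (yy k) (yy i) * dlt F (c1 * c2) (yy j)
            + dlt F (yy k) (yy j) * dlt F (c1 * c2) (yy i)
          = (dlt F (yy k) (yy i) * dlt F c1 (yy j) + dlt F (yy k) (yy j) * dlt F c1 (yy i))
            + (dlt F (yy k) (yy i) * dlt F c2 (yy j) + dlt F (yy k) (yy j) * dlt F c2 (yy i))
            + (dlt F (yy k) (yy i) * (dlt F c1 (yy j) * dlt F c2 (yy j))
              + dlt F (yy k) (yy j) * (dlt F c1 (yy i) * dlt F c2 (yy i))) := by
        rw [dlt_mul_left, dlt_mul_left]; noncomm_ring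
      rw [e]
      exact (II F).add_mem ((II F).add_mem ih1 ih2)
        ((II F).add_mem ((II F).mul_mem_left _ _ (stageA F j c1 c2))
          ((II F).mul_mem_left _ _ (stageA F i c1 c2)))
    | hinv c ih => rw [dlt_inv_left, dlt_inv_left]; exact ih
  | hmul a1 a2 ih1 ih2 =>
    intro c
    have e : dlt F (a1 * a2) (yy i) * dlt F c (yy j)
          + dlt F (a1 * a2) (yy j) * dlt F c (yy i)
        = (dlt F a1 (yy i) * dlt F c (yy j) + dlt F a1 (yy j) * dlt F c (yy i))
          + (dlt F a2 (yy i) * dlt F c (yy j) + dlt F a2 (yy j) * dlt F c (yy i))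
          + ((dlt F a1 (yy i) * dlt F a2 (yy i)) * dlt F c (yy j)
            + (dlt F a1 (yy j) * dlt F a2 (yy j)) * dlt F c (yy i)) := by
      rw [dlt_mul_left, dlt_mul_left]; noncomm_ring
    rw [e]
    exact (II F).add_mem ((II F).add_mem (ih1 c) (ih2 c))
      ((II F).add_mem ((II F).mul_mem_right _ _ (stageA F i a1 a2))
        ((II F).mul_mem_right _ _ (stageA F j a1 a2)))
  | hinv a ih => intro c; rw [dlt_inv_left, dlt_inv_left]; exact ih c

lemma lemC1 (i j : ℕ) (a : GrpG) : dlt F (yy i) a * dlt F (yy j) a ∈ II F := by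
  induction a using grp_ind with
  | h1 => rw [dlt_one_right, zero_mul]; exact (II F).zero_mem
  | hy k => exact stageA F k (yy i) (yy j)
  | hmul a1 a2 ih1 ih2 =>
    have hx : dlt F (yy i) a1 * dlt F (yy i) a2 ∈ II F := by
      rw [dlt_symm F (yy i) a1, dlt_symm F (yy i) a2]
      exact stageA F i a1 a2
    have hz : dlt F (yy j) a1 * dlt F (yy j) a2 ∈ II F := by
      rw [dlt_symm F (yy j) a1, dlt_symm F (yy j) a2]
      exact stageA F j a1 a2
    have hcross : dlt F (yy i) a1 * dlt F (yy j) a2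
        + dlt F (yy i) a2 * dlt F (yy j) a1 ∈ II F := by
      have h := stageB F i j a1 a2
      rw [dlt_symm F a1 (yy i), dlt_symm F a2 (yy j), dlt_symm F a1 (yy j),
        dlt_symm F a2 (yy i),
        (dlt_commute F (yy j) a1 (dlt F (yy i) a2)).eq] at h
      exact h
    have e : dlt F (yy i) (a1 * a2) * dlt F (yy j) (a1 * a2)
        = (dlt F (yy i) a1 * dlt F (yy i) a2) * (dlt F (yy j) a1 * dlt F (yy j) a2)
          + (dlt F (yy i) a1 * dlt F (yy i) a2) * dlt F (yy j) a1
          + (dlt F (yy i) a1 * dlt F (yy i) a2) * dlt F (yy j) a2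
          + dlt F (yy i) a1 * (dlt F (yy j) a1 * dlt F (yy j) a2)
          + dlt F (yy i) a2 * (dlt F (yy j) a1 * dlt F (yy j) a2)
          + dlt F (yy i) a1 * dlt F (yy j) a1
          + dlt F (yy i) a2 * dlt F (yy j) a2
          + (dlt F (yy i) a1 * dlt F (yy j) a2 + dlt F (yy i) a2 * dlt F (yy j) a1) := by
      rw [dlt_mul_right, dlt_mul_right]; noncomm_ring
    rw [e]
    refine (II F).add_mem ((II F).add_mem ((II F).add_mem ((II F).add_mem ((II F).add_mem
      ((II F).add_mem ((II F).add_mem ?_ ?_) ?_) ?_) ?_) ?_) ?_) hcross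
    · exact (II F).mul_mem_right _ _ hx
    · exact (II F).mul_mem_right _ _ hx
    · exact (II F).mul_mem_right _ _ hx
    · exact (II F).mul_mem_left _ _ hz
    · exact (II F).mul_mem_left _ _ hz
    · exact ih1
    · exact ih2
  | hinv a ih => rw [dlt_inv_right, dlt_inv_right]; exact ih

lemma R1gen (a : GrpG) (i : ℕ) (v : GrpG) : dlt F a (yy i) * dlt F a v ∈ II F := by
  induction v using grp_ind with
  | h1 => rw [dlt_one_right, mul_zero]; exact (II F).zero_mem
  | hy j =>
    rw [dlt_symm F a (yy i), dlt_symm F a (yy j)]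
    exact lemC1 F i j a
  | hmul v1 v2 ih1 ih2 =>
    have e : dlt F a (yy i) * dlt F a (v1 * v2)
        = (dlt F a (yy i) * dlt F a v1) * dlt F a v2
          + dlt F a (yy i) * dlt F a v1 + dlt F a (yy i) * dlt F a v2 := by
      rw [dlt_mul_right]; noncomm_ring
    rw [e]
    exact (II F).add_mem ((II F).add_mem ((II F).mul_mem_right _ _ ih1) ih1) ih2
  | hinv v ih => rw [dlt_inv_right]; exact ih

lemma R1 (a u : GrpG) : ∀ v : GrpG, dlt F a u * dlt F a v ∈ II F := by
  induction u using grp_ind with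
  | h1 => intro v; rw [dlt_one_right, zero_mul]; exact (II F).zero_mem
  | hy i => exact fun v => R1gen F a i v
  | hmul u1 u2 ih1 ih2 =>
    intro v
    have e : dlt F a (u1 * u2) * dlt F a v
        = (dlt F a u1 * dlt F a u2) * dlt F a v
          + dlt F a u1 * dlt F a v + dlt F a u2 * dlt F a v := by
      rw [dlt_mul_right]; noncomm_ring
    rw [e]
    exact (II F).add_mem ((II F).add_mem ((II F).mul_mem_right _ _ (ih1 u2)) (ih1 v)) (ih2 v)
  | hinv u ih => intro v; rw [dlt_inv_right]; exact ih v

lemma R2 (a b c : GrpG) : dlt F a b * dlt F c b ∈ II F := by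
  rw [dlt_symm F a b, dlt_symm F c b]
  exact R1 F b a c

end Main

-- group identities for the final computation
lemma grp_id1 (g h k : GrpG) : h * g * k = g * h * k * gc h g := by
  calc h * g * k = g * h * gc h g * k := by unfold gc; group
    _ = g * h * (gc h g * k) := by group
    _ = g * h * (k * gc h g) := by rw [(central_comm (gc_central h g) k).symm]
    _ = g * h * k * gc h g := by group

lemma grp_id2 (g h k : GrpG) : k * g * h = g * h * k * gc k (g * h) := by
  unfold gc; group

lemma grp_id3 (g h k : GrpG) : k * h * g = g * h * k * gc h g * gc k (g * h) := by
  calc k * h * g = k * (g * h) * gc h g := by unfold gc; group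
    _ = g * h * k * gc k (g * h) * gc h g := by
        rw [show k * (g * h) = g * h * k * gc k (g * h) by unfold gc; group]
    _ = g * h * k * (gc k (g * h) * gc h g) := by group
    _ = g * h * k * (gc h g * gc k (g * h)) := by
        rw [central_comm (gc_central h g) (gc k (g * h))]
    _ = g * h * k * gc h g * gc k (g * h) := by group

section Final

variable (F : Type*) [Field F] [CharP F 2]

lemma key_eq (g h k : GrpG) :
    (MonoidAlgebra.of F GrpG g * MonoidAlgebra.of F GrpG h
        - MonoidAlgebra.of F GrpG h * MonoidAlgebra.of F GrpG g) * MonoidAlgebra.of F GrpG k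
      - MonoidAlgebra.of F GrpG k * (MonoidAlgebra.of F GrpG g * MonoidAlgebra.of F GrpG h
        - MonoidAlgebra.of F GrpG h * MonoidAlgebra.of F GrpG g)
    = MonoidAlgebra.of F GrpG (g * h * k) * (dlt F h g * dlt F k (g * h)) := by
  rw [sub_eq_add' F, sub_eq_add' F]
  unfold dlt
  simp only [mul_add, add_mul, mul_one, one_mul, ← mul_assoc, ← map_mul]
  rw [grp_id1 g h k, grp_id2 g h k, grp_id3 g h k]
  abel

theorem main_grp (g h k : GrpG) :
    (MonoidAlgebra.of F GrpG g * MonoidAlgebra.of F GrpG h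
        - MonoidAlgebra.of F GrpG h * MonoidAlgebra.of F GrpG g) * MonoidAlgebra.of F GrpG k
      - MonoidAlgebra.of F GrpG k * (MonoidAlgebra.of F GrpG g * MonoidAlgebra.of F GrpG h
        - MonoidAlgebra.of F GrpG h * MonoidAlgebra.of F GrpG g) ∈ II F := by
  rw [key_eq]
  refine (II F).mul_mem_left _ _ ?_
  have e : dlt F h g * dlt F k (g * h)
      = (dlt F h g * dlt F k g) * dlt F k h
        + dlt F h g * dlt F k g + dlt F h g * dlt F k h := by
    rw [dlt_mul_right]; noncomm_ring
  rw [e]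
  refine (II F).add_mem ((II F).add_mem ((II F).mul_mem_right _ _ (R2 F h g k)) (R2 F h g k)) ?_
  rw [dlt_symm F h g]
  exact R2 F g h k

end Final

/-- over a field of characteristic 2, `[u1,u2,u3] ∈ I` for all
`u1, u2, u3 ∈ F𝒢`, i.e. `F𝒢/I` is Lie nilpotent of class at most 2. -/
theorem groupAlgebra_lnc_mem_ideal
    (F : Type*) [Field F] [CharP F 2] :
    ∀ u1 u2 u3 : MonoidAlgebra F GrpG,
      (u1 * u2 - u2 * u1) * u3 - u3 * (u1 * u2 - u2 * u1) ∈ II F := by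
  intro u1 u2 u3
  induction u1 using MonoidAlgebra.induction_on with
  | add f f' hf hf' =>
    have e : ((f + f') * u2 - u2 * (f + f')) * u3 - u3 * ((f + f') * u2 - u2 * (f + f'))
        = ((f * u2 - u2 * f) * u3 - u3 * (f * u2 - u2 * f))
          + ((f' * u2 - u2 * f') * u3 - u3 * (f' * u2 - u2 * f')) := by noncomm_ring
    rw [e]; exact (II F).add_mem hf hf'
  | smul r f hf =>
    have e : (r • f * u2 - u2 * (r • f)) * u3 - u3 * (r • f * u2 - u2 * (r • f))
        = r • ((f * u2 - u2 * f) * u3 - u3 * (f * u2 - u2 * f)) := by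
      simp only [smul_mul_assoc, mul_smul_comm, ← smul_sub]
    rw [e]; exact smul_mem_II F r hf
  | of g =>
    induction u2 using MonoidAlgebra.induction_on with
    | add f f' hf hf' =>
      set x := MonoidAlgebra.of F GrpG g
      have e : (x * (f + f') - (f + f') * x) * u3 - u3 * (x * (f + f') - (f + f') * x)
          = ((x * f - f * x) * u3 - u3 * (x * f - f * x))
            + ((x * f' - f' * x) * u3 - u3 * (x * f' - f' * x)) := by noncomm_ring
      rw [e]; exact (II F).add_mem hf hf'
    | smul r f hf =>
      set x := MonoidAlgebra.of F GrpG g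
      have e : (x * (r • f) - (r • f) * x) * u3 - u3 * (x * (r • f) - (r • f) * x)
          = r • ((x * f - f * x) * u3 - u3 * (x * f - f * x)) := by
        simp only [smul_mul_assoc, mul_smul_comm, ← smul_sub]
      rw [e]; exact smul_mem_II F r hf
    | of h =>
      induction u3 using MonoidAlgebra.induction_on with
      | add f f' hf hf' =>
        set x := MonoidAlgebra.of F GrpG g
        set y := MonoidAlgebra.of F GrpG h
        have e : (x * y - y * x) * (f + f') - (f + f') * (x * y - y * x)
            = ((x * y - y * x) * f - f * (x * y - y * x))
              + ((x * y - y * x) * f' - f' * (x * y - y * x)) := by noncomm_ring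
        rw [e]; exact (II F).add_mem hf hf'
      | smul r f hf =>
        set x := MonoidAlgebra.of F GrpG g
        set y := MonoidAlgebra.of F GrpG h
        have e : (x * y - y * x) * (r • f) - (r • f) * (x * y - y * x)
            = r • ((x * y - y * x) * f - f * (x * y - y * x)) := by
          simp only [smul_mul_assoc, mul_smul_comm, ← smul_sub]
        rw [e]; exact smul_mem_II F r hf
      | of k => exact main_grp F g h k
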